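/- Let R be a commutative ring and S a multiplicative subset. If R is S-coherent, then R_S is a coherent ring. -/

import Mathlib

/-- `M` is `S`-finite. -/
def IsSFinite {R : Type*} [CommRing R] (S : Submonoid R) (M : Type*) [AddCommGroup M]
    [Module R M] : Prop :=
  ∃ s ∈ S, ∃ L : Submodule R M, L.FG ∧ ∀ m : M, s • m ∈ L

/-- `M` is `S`-finitely presented. -/
def IsSFinitelyPresented {R : Type*} [CommRing R] (S : Submonoid R) (M : Type*)
    [AddCommGroup M] [Module R M] : Prop :=
  ∃ (n : ℕ) (f : (Fin n → R) →ₗ[R] M), Function.Surjective f ∧ IsSFinite S (LinearMap.ker f)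

/-- `R` is `S`-coherent. -/
def IsSCoherent (R : Type*) [CommRing R] (S : Submonoid R) : Prop :=
  ∀ I : Ideal R, I.FG → IsSFinitelyPresented S I

lemma aux_pi_eq {n : ℕ} {R : Type*} [CommRing R] (a : Fin n → R) :
    a = ∑ i, a i • (Pi.single i 1 : Fin n → R) := by
  classical
  have := pi_eq_sum_univ a
  convert this using 2 with i
  ext j
  simp [Pi.single_apply, eq_comm]

/-- If `R` is `S`-coherent, then `R_S` is a coherent ring (every finitely
generated ideal of `R_S` is finitely presented). -/
theorem stmt16 {R : Type*} [CommRing R] (S : Submonoid R) (hcoh : IsSCoherent R S) :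
    ∀ I : Ideal (Localization S), I.FG → Module.FinitePresentation (Localization S) I := by
  classical
  intro J hJ
  set Rs := Localization S
  obtain ⟨T, hT⟩ := hJ
  choose nd hnd using fun t : T => IsLocalization.surj (M := S) (S := Rs) (t : Rs)
  -- the ideal of numerators
  set I : Ideal R := Ideal.span (Set.range fun t : T => (nd t).1) with hIdef
  have hI : I.FG := Submodule.fg_span (Set.finite_range _)
  have hTJ : ∀ t : T, (t : Rs) ∈ J := fun t => hT ▸ Submodule.subset_span t.2
  have hIJ : ∀ y ∈ I, (algebraMap R Rs) y ∈ J := by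
    intro y hy
    have : I ≤ J.comap (algebraMap R Rs) := by
      rw [hIdef, Ideal.span_le]
      rintro _ ⟨t, rfl⟩
      have : (algebraMap R Rs) (nd t).1 ∈ J := by
        rw [← hnd t]; exact J.mul_mem_right _ (hTJ t)
      exact this
    exact this hy
  -- generators of I as elements of I
  have hnumI : ∀ t : T, (nd t).1 ∈ I := fun t => Submodule.subset_span ⟨t, rfl⟩
  obtain ⟨n, f, hf, s, hs, L, ⟨TL, hTL⟩, hL⟩ := hcoh I hI
  set c : Fin n → R := fun i => (f (Pi.single i 1) : R) with hcdef
  have hc : ∀ a : Fin n → R, (f a : R) = ∑ i, a i * c i := by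
    intro a
    conv_lhs => rw [aux_pi_eq a]
    rw [map_sum]
    simp [smul_eq_mul]
    rfl
  -- the localized presentation map
  set g : (Fin n → Rs) →ₗ[Rs] Rs := Fintype.linearCombination Rs (fun i => (algebraMap R Rs) (c i)) with hgdef
  have hgapp : ∀ x : Fin n → Rs, g x = ∑ i, x i * (algebraMap R Rs) (c i) := by
    intro x
    rw [hgdef, Fintype.linearCombination_apply]
    simp [smul_eq_mul]
  set φ : (Fin n → R) →ₗ[R] (Fin n → Rs) :=
    LinearMap.pi (fun i => (Algebra.linearMap R Rs).comp (LinearMap.proj i)) with hφdef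
  have hφapp : ∀ (a : Fin n → R) (i : Fin n), φ a i = (algebraMap R Rs) (a i) := fun a i => rfl
  have key : ∀ a : Fin n → R, g (φ a) = (algebraMap R Rs) (f a : R) := by
    intro a
    rw [hgapp, hc, map_sum]
    simp [hφapp, map_mul]
  have hcI : ∀ i, c i ∈ I := fun i => (f (Pi.single i 1)).2
  have hrange : ∀ x : Fin n → Rs, g x ∈ J := by
    intro x
    rw [hgapp]
    exact Submodule.sum_mem _ fun i _ => J.mul_mem_left _ (hIJ _ (hcI i))
  set g' : (Fin n → Rs) →ₗ[Rs] J := LinearMap.codRestrict (J.restrictScalars Rs) g hrange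
    with hg'def
  -- surjectivity
  have hsurj : Function.Surjective g' := by
    rintro ⟨z, hz⟩
    have hzr : z ∈ LinearMap.range g := by
      have hJle : J ≤ LinearMap.range g := by
        rw [← hT, Ideal.span_le]
        rintro _ ht
        have hmem : (⟨_, ht⟩ : T).1 ∈ LinearMap.range g := by
          set t : T := ⟨_, ht⟩
          obtain ⟨a, ha⟩ := hf ⟨(nd t).1, hnumI t⟩
          have h1 : g (φ a) = (algebraMap R Rs) (nd t).1 := by
            rw [key, ha]
          have hu : IsUnit ((algebraMap R Rs) ((nd t).2 : R)) := IsLocalization.map_units Rs (nd t).2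
          obtain ⟨v, hv⟩ := hu.exists_left_inv
          refine ⟨v • φ a, ?_⟩
          rw [map_smul, h1, ← hnd t, smul_eq_mul]
          calc v * ((t : Rs) * (algebraMap R Rs) ((nd t).2 : R))
              = (v * (algebraMap R Rs) ((nd t).2 : R)) * (t : Rs) := by ring
            _ = (t : Rs) := by rw [hv, one_mul]
        exact hmem
      exact hJle hz
    obtain ⟨x, hx⟩ := hzr
    exact ⟨x, Subtype.ext hx⟩
  -- kernel
  have hkg : LinearMap.ker g = Submodule.span Rs
      ((fun m : LinearMap.ker f => φ (m : Fin n → R)) '' (TL : Set (LinearMap.ker f))) := by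
    apply le_antisymm
    · -- ker ≤ span
      intro x hx
      rw [LinearMap.mem_ker] at hx
      obtain ⟨b, hb⟩ := IsLocalization.exist_integer_multiples S Finset.univ x
      choose a ha using fun i => hb i (Finset.mem_univ i)
      have ha' : ∀ i, (algebraMap R Rs) (a i) = (b : R) • x i := ha
      have h0 : (algebraMap R Rs) (∑ i, a i * c i) = 0 := by
        rw [map_sum]
        have : ∀ i, (algebraMap R Rs) (a i * c i) = ((algebraMap R Rs) (b : R)) * (x i * (algebraMap R Rs) (c i)) := by
          intro i
          rw [map_mul, ha' i, Algebra.smul_def, mul_assoc]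
        simp only [this, ← Finset.mul_sum, ← hgapp, hx, mul_zero]
      obtain ⟨u, hu⟩ := (IsLocalization.map_eq_zero_iff S Rs _).mp h0
      set m0 : Fin n → R := (u : R) • a with hm0
      have hm0ker : m0 ∈ LinearMap.ker f := by
        rw [LinearMap.mem_ker]
        have : (f m0 : R) = 0 := by
          rw [hc, hm0]
          simp only [Pi.smul_apply, smul_eq_mul, mul_assoc, ← Finset.mul_sum]
          exact hu
        exact Subtype.ext this
      have hsm : s • (⟨m0, hm0ker⟩ : LinearMap.ker f) ∈ L := hL _
      -- push into span
      set ψ : LinearMap.ker f →ₗ[R] (Fin n → Rs) := φ.comp (LinearMap.ker f).subtype with hψ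
      have hφs : φ (s • m0) ∈ Submodule.span Rs
          ((fun m : LinearMap.ker f => φ (m : Fin n → R)) '' (TL : Set (LinearMap.ker f))) := by
        have h1 : ψ (s • (⟨m0, hm0ker⟩ : LinearMap.ker f)) ∈ Submodule.map ψ L :=
          Submodule.mem_map_of_mem hsm
        rw [← hTL, Submodule.map_span] at h1
        have h2 : Submodule.span R (ψ '' (TL : Set (LinearMap.ker f))) ≤
            (Submodule.span Rs ((fun m : LinearMap.ker f => φ (m : Fin n → R)) ''
              (TL : Set (LinearMap.ker f)))).restrictScalars R := by
          rw [Submodule.span_le]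
          rintro _ ⟨m, hm, rfl⟩
          exact Submodule.subset_span ⟨m, hm, rfl⟩
        exact h2 h1
      -- relate φ (s • m0) to x
      have hx' : φ (s • m0) = (algebraMap R Rs) (s * (u : R) * (b : R)) • x := by
        funext i
        have h1 : m0 i = (u : R) * a i := rfl
        simp only [hφapp, Pi.smul_apply, smul_eq_mul]
        rw [h1, map_mul, map_mul, map_mul, map_mul, ha' i, Algebra.smul_def]
        ring
      have htmem : s * (u : R) * (b : R) ∈ S := S.mul_mem (S.mul_mem hs u.2) b.2
      have hunit : IsUnit ((algebraMap R Rs) (s * (u : R) * (b : R))) :=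
        IsLocalization.map_units Rs ⟨_, htmem⟩
      obtain ⟨v, hv⟩ := hunit.exists_left_inv
      have : x = v • ((algebraMap R Rs) (s * (u : R) * (b : R)) • x) := by
        rw [smul_smul, hv, one_smul]
      rw [this, ← hx']
      exact Submodule.smul_mem _ _ hφs
    · rw [Submodule.span_le]
      rintro _ ⟨m, _, rfl⟩
      have : g (φ (m : Fin n → R)) = 0 := by
        rw [key]
        have : f (m : Fin n → R) = 0 := m.2
        rw [this]
        simp
      exact this
  have hker : (LinearMap.ker g').FG := by
    have : LinearMap.ker g' = LinearMap.ker g := LinearMap.ker_codRestrict _ _ _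
    rw [this, hkg]
    exact Submodule.fg_span ((TL : Set (LinearMap.ker f)).toFinite.image _)
  exact Module.finitePresentation_of_free_of_surjective g' hsurj hker
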